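/- Let n ≥ 1 and let u : ℝⁿ → ℝⁿ be continuous. Suppose that for all smooth compactly supported f, g : ℝⁿ → ℝ, ∫_{ℝⁿ} ⟨u(x), g(x)∇f(x) − f(x)∇g(x)⟩ dx = 0. Then u(x) = 0 for every x ∈ ℝⁿ. -/

import Mathlib

open MeasureTheory Matrix

/-- The gradient of a scalar function on `ℝⁿ`, given by the partial derivatives. -/
noncomputable def grad {n : ℕ} (f : (Fin n → ℝ) → ℝ) (x : Fin n → ℝ) : Fin n → ℝ :=
  fun i => fderiv ℝ f x (Pi.single i 1)

lemma grad_continuous {n : ℕ} {f : (Fin n → ℝ) → ℝ} (hf : ContDiff ℝ (⊤ : ℕ∞) f) :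
    Continuous (grad f) := by
  apply continuous_pi
  intro i
  exact (ContinuousLinearMap.apply ℝ ℝ (Pi.single i 1 : Fin n → ℝ)).continuous.comp
    (hf.continuous_fderiv (by simp))

lemma grad_zero_of_not_mem {n : ℕ} {f : (Fin n → ℝ) → ℝ} {x : Fin n → ℝ}
    (hx : x ∉ tsupport f) : grad f x = 0 := by
  funext i
  simp [grad, fderiv_of_notMem_tsupport ℝ hx]

lemma grad_mul {n : ℕ} {f g : (Fin n → ℝ) → ℝ} (hf : ContDiff ℝ (⊤ : ℕ∞) f)
    (hg : ContDiff ℝ (⊤ : ℕ∞) g) (x : Fin n → ℝ) :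
    grad (fun y => f y * g y) x = g x • grad f x + f x • grad g x := by
  funext i
  simp only [grad, fderiv_fun_mul (hf.differentiable (by simp) x) (hg.differentiable (by simp) x),
    ContinuousLinearMap.add_apply, ContinuousLinearMap.smul_apply, Pi.add_apply,
    Pi.smul_apply, smul_eq_mul]
  ring

lemma grad_congr_nhds {n : ℕ} {f g : (Fin n → ℝ) → ℝ} {x : Fin n → ℝ}
    (h : f =ᶠ[nhds x] g) : grad f x = grad g x := by
  funext i
  simp [grad, h.fderiv_eq]

lemma continuous_dot {n : ℕ} {α : Type*} [TopologicalSpace α] {u v : α → (Fin n → ℝ)}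
    (hu : Continuous u) (hv : Continuous v) : Continuous (fun x => u x ⬝ᵥ v x) := by
  simp only [dotProduct]
  exact continuous_finset_sum _ fun i _ =>
    ((continuous_apply i).comp hu).mul ((continuous_apply i).comp hv)

theorem stmt_7 (n : ℕ) (hn : 1 ≤ n)
    (u : (Fin n → ℝ) → (Fin n → ℝ)) (hu : Continuous u)
    (h : ∀ f g : (Fin n → ℝ) → ℝ,
      ContDiff ℝ (⊤ : ℕ∞) f → HasCompactSupport f →
      ContDiff ℝ (⊤ : ℕ∞) g → HasCompactSupport g →
      ∫ x, u x ⬝ᵥ (g x • grad f x - f x • grad g x) = 0) :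
    ∀ x, u x = 0 := by
  -- Step A: ∫ u ⬝ᵥ grad f = 0 for all test f
  have key1 : ∀ f : (Fin n → ℝ) → ℝ, ContDiff ℝ (⊤ : ℕ∞) f → HasCompactSupport f →
      ∫ x, u x ⬝ᵥ grad f x = 0 := by
    intro f hf hfc
    obtain ⟨R, hR⟩ := (hfc.isBounded).subset_ball (0 : Fin n → ℝ)
    set φ : ContDiffBump (0 : Fin n → ℝ) :=
      ⟨max R 0 + 1, max R 0 + 2, by positivity, by linarith⟩ with hφ
    have hg : ContDiff ℝ (⊤ : ℕ∞) (fun x => φ x) := φ.contDiff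
    have hgc : HasCompactSupport (fun x => φ x) := φ.hasCompactSupport
    have hsub : tsupport f ⊆ Metric.ball (0 : Fin n → ℝ) (max R 0 + 1) := by
      refine hR.trans (Metric.ball_subset_ball ?_)
      have : R ≤ max R 0 := le_max_left _ _
      linarith
    have key := h f (fun x => φ x) hf hfc hg hgc
    have heq : (fun x => u x ⬝ᵥ (φ x • grad f x - f x • grad (fun y => φ y) x))
        = fun x => u x ⬝ᵥ grad f x := by
      funext x
      by_cases hx : x ∈ Metric.ball (0 : Fin n → ℝ) (max R 0 + 1)
      · have h1 : φ x = 1 := φ.one_of_mem_closedBall (Metric.ball_subset_closedBall hx)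
        have h2 : grad (fun y => φ y) x = 0 := by
          have heq1 : (fun y => φ y) =ᶠ[nhds x] (fun _ => (1 : ℝ)) := by
            filter_upwards [Metric.isOpen_ball.mem_nhds hx] with y hy
            exact φ.one_of_mem_closedBall (Metric.ball_subset_closedBall hy)
          rw [grad_congr_nhds heq1]
          funext i
          simp [grad]
        rw [h1, h2]
        simp
      · have hx' : x ∉ tsupport f := fun hmem => hx (hsub hmem)
        have h1 : f x = 0 := image_eq_zero_of_notMem_tsupport hx'
        have h2 : grad f x = 0 := grad_zero_of_not_mem hx'
        rw [h1, h2]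
        simp
    rw [heq] at key
    exact key
  -- Step C: ∫ f x * (u x ⬝ᵥ grad g x) = 0 for all test f, g
  have key2 : ∀ f g : (Fin n → ℝ) → ℝ, ContDiff ℝ (⊤ : ℕ∞) f → HasCompactSupport f →
      ContDiff ℝ (⊤ : ℕ∞) g → HasCompactSupport g →
      ∫ x, f x * (u x ⬝ᵥ grad g x) = 0 := by
    intro f g hf hfc hg hgc
    set A : (Fin n → ℝ) → ℝ := fun x => g x * (u x ⬝ᵥ grad f x) with hA
    set B : (Fin n → ℝ) → ℝ := fun x => f x * (u x ⬝ᵥ grad g x) with hB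
    have hAc : Continuous A := hg.continuous.mul (continuous_dot hu (grad_continuous hf))
    have hBc : Continuous B := hf.continuous.mul (continuous_dot hu (grad_continuous hg))
    have hAcs : HasCompactSupport A := hgc.mul_right
    have hBcs : HasCompactSupport B := hfc.mul_right
    have hAint : Integrable A := hAc.integrable_of_hasCompactSupport hAcs
    have hBint : Integrable B := hBc.integrable_of_hasCompactSupport hBcs
    have e1 : ∫ x, A x + B x = 0 := by
      have k := key1 (fun y => f y * g y) (hf.mul hg) (hfc.mul_right)
      have : (fun x => u x ⬝ᵥ grad (fun y => f y * g y) x) = fun x => A x + B x := by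
        funext x
        rw [grad_mul hf hg]
        simp only [hA, hB, dotProduct_add, dotProduct_smul, smul_eq_mul]
      rwa [this] at k
    have e2 : ∫ x, A x - B x = 0 := by
      have k := h f g hf hfc hg hgc
      have : (fun x => u x ⬝ᵥ (g x • grad f x - f x • grad g x)) = fun x => A x - B x := by
        funext x
        simp only [hA, hB, dotProduct_sub, dotProduct_smul, smul_eq_mul]
      rwa [this] at k
    rw [integral_add hAint hBint] at e1
    rw [integral_sub hAint hBint] at e2
    have : ∫ x, B x = 0 := by linarith
    exact this
  -- Step D: pointwise u x ⬝ᵥ grad g x = 0 for all test g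
  have key3 : ∀ g : (Fin n → ℝ) → ℝ, ContDiff ℝ (⊤ : ℕ∞) g → HasCompactSupport g →
      ∀ x, u x ⬝ᵥ grad g x = 0 := by
    intro g hg hgc
    have hc : Continuous (fun x => u x ⬝ᵥ grad g x) := continuous_dot hu (grad_continuous hg)
    have hli : LocallyIntegrable (fun x => u x ⬝ᵥ grad g x) volume := hc.locallyIntegrable
    have hae : ∀ᵐ x ∂(volume : Measure (Fin n → ℝ)), u x ⬝ᵥ grad g x = 0 := by
      apply ae_eq_zero_of_integral_contDiff_smul_eq_zero hli
      intro f hfd hfs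
      simpa [smul_eq_mul] using key2 f g hfd hfs hg hgc
    have := (volume : Measure (Fin n → ℝ)).eq_of_ae_eq hae hc continuous_const
    intro x
    exact congrFun this x
  -- Step E: conclude
  intro x₀
  funext i
  set φ : ContDiffBump x₀ := ⟨1, 2, one_pos, one_lt_two⟩ with hφ
  set g : (Fin n → ℝ) → ℝ := fun x => x i * φ x with hgdef
  have hproj : ContDiff ℝ (⊤ : ℕ∞) (fun x : Fin n → ℝ => x i) :=
    (ContinuousLinearMap.proj i : (Fin n → ℝ) →L[ℝ] ℝ).contDiff
  have hg : ContDiff ℝ (⊤ : ℕ∞) g := hproj.mul φ.contDiff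
  have hgc : HasCompactSupport g := φ.hasCompactSupport.mul_left
  have key := key3 g hg hgc x₀
  have heq : g =ᶠ[nhds x₀] (fun x => x i) := by
    filter_upwards [Metric.isOpen_ball.mem_nhds (Metric.mem_ball_self φ.rIn_pos)] with y hy
    simp [hgdef, φ.one_of_mem_closedBall (Metric.ball_subset_closedBall hy)]
  have hgr : grad g x₀ = Pi.single i 1 := by
    rw [grad_congr_nhds heq]
    funext j
    have hfd : fderiv ℝ (fun x : Fin n → ℝ => x i) x₀
        = (ContinuousLinearMap.proj i : (Fin n → ℝ) →L[ℝ] ℝ) :=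
      (ContinuousLinearMap.proj i : (Fin n → ℝ) →L[ℝ] ℝ).fderiv
    simp only [grad, hfd, ContinuousLinearMap.proj_apply]
    simp [Pi.single_apply, eq_comm]
  rw [hgr, dotProduct_single, mul_one] at key
  exact key
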